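/- Assume Hypothesis (HA) and let k ≥ 1 be a natural number such that σ_per(P) = {λ e^{2πi j/k} : j = 0, 1, …, k−1}. Then ker(P^{k+1} − λ^{k+1}) = ker(P − λ) = span_ℂ{g} in L^∞(M,μ;ℂ). -/

import Mathlib

open MeasureTheory ProbabilityTheory Filter Topology

namespace QEM

noncomputable section

variable {M : Type*} [MetricSpace M] [CompactSpace M] [MeasurableSpace M] [BorelSpace M]

/-- The weighted Koopman operator on real-valued functions:
`P f (x) = e^{φ(x)} ∫ f(y) κ(x,dy)`. -/
def PR (φ : M → ℝ) (κ : Kernel M M) (f : M → ℝ) : M → ℝ :=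
  fun x => Real.exp (φ x) * ∫ y, f y ∂(κ x)

/-- The weighted Koopman operator on complex-valued functions
(`P f := P(Re f) + i P(Im f)`, equivalently with the complex Bochner integral). -/
def PC (φ : M → ℝ) (κ : Kernel M M) (f : M → ℂ) : M → ℂ :=
  fun x => (Real.exp (φ x) : ℂ) * ∫ y, f y ∂(κ x)

/-- Bounded measurable real-valued functions. -/
def BddMeas (f : M → ℝ) : Prop := Measurable f ∧ ∃ C : ℝ, ∀ x, |f x| ≤ C

/-- Bounded measurable complex-valued functions. -/
def BddMeasC (f : M → ℂ) : Prop := Measurable f ∧ ∃ C : ℝ, ∀ x, ‖f x‖ ≤ C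

/-- The operator `P_g f := P (1_{g>0} · f)`. -/
def Pg (φ : M → ℝ) (κ : Kernel M M) (g : M → ℝ) : (M → ℝ) → (M → ℝ) :=
  fun f => PR φ κ (Set.indicator {x | 0 < g x} f)

/-- Complex version of `P_g`. -/
def PgC (φ : M → ℝ) (κ : Kernel M M) (g : M → ℝ) : (M → ℂ) → (M → ℂ) :=
  fun f => PC φ κ (Set.indicator {x | 0 < g x} f)

/-- The indicator function of `{g > 0}`. -/
def oneG (g : M → ℝ) : M → ℝ := Set.indicator {x | 0 < g x} (fun _ => (1 : ℝ))

/-- The normalized restriction `μ̃` of `μ` to `{g > 0}`, i.e.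
`μ̃(A) = μ(A ∩ {g>0}) / μ({g>0})`. -/
def mtilde (μ : Measure M) (g : M → ℝ) : Measure M :=
  (μ {x | 0 < g x})⁻¹ • μ.restrict {x | 0 < g x}

/-- The root-of-unity phase `e^{2πi j/k}`. -/
def rootU (k j : ℕ) : ℂ := Complex.exp (2 * (Real.pi : ℂ) * Complex.I * (j : ℂ) / (k : ℂ))

/-- Basic standing setup: `μ` is a fully supported Borel probability measure, `κ` a
sub-Markov kernel with `κ(x,·) ≪ μ` for all `x`, and `φ` a (bounded) continuous function. -/
structure Setup (μ : Measure M) (κ : Kernel M M) (φ : M → ℝ) : Prop where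
  prob : IsProbabilityMeasure μ
  fullSupp : ∀ U : Set M, IsOpen U → U.Nonempty → 0 < μ U
  subMarkov : ∀ x, κ x Set.univ ≤ 1
  ac : ∀ x, κ x ≪ μ
  contφ : Continuous φ

/-- Hypothesis (HA): (i) `P` is strong Feller; (ii) `lam > 0` equals the spectral radius of the
induced operator `T` on `L^∞(M,μ;ℂ)` (where `T` agrees a.e. with the pointwise operator `P` on
bounded measurable representatives); (iii) the eigenspace of `P` at `lam` in `L^∞(M,μ)` is
one-dimensional, spanned by a continuous nonnegative `g ≢ 0` with `P g = lam·g` and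
`∫ g dμ = μ {g>0}`; (iv) `P^*μ = lam·μ`. -/
structure HypHA (μ : Measure M) (κ : Kernel M M) (φ : M → ℝ)
    (T : Lp ℂ ⊤ μ →L[ℂ] Lp ℂ ⊤ μ) (lam : ℝ) (g : M → ℝ) : Prop where
  setup : Setup μ κ φ
  strongFeller : ∀ f : M → ℝ, BddMeas f → Continuous (PR φ κ f)
  lam_pos : 0 < lam
  Tcompat : ∀ f : M → ℂ, BddMeasC f → ∀ F : Lp ℂ ⊤ μ, ⇑F =ᵐ[μ] f →
      ⇑(T F) =ᵐ[μ] PC φ κ f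
  specRad : spectralRadius ℂ T = ENNReal.ofReal lam
  g_cont : Continuous g
  g_nonneg : ∀ x, 0 ≤ g x
  g_ne : g ≠ 0
  g_eigen : PR φ κ g = fun x => lam * g x
  g_int : ∫ x, g x ∂μ = (μ {x | 0 < g x}).toReal
  eigen_dim : ∀ f : M → ℝ, BddMeas f → PR φ κ f =ᵐ[μ] (fun x => lam * f x) →
      ∃ c : ℝ, f =ᵐ[μ] fun x => c * g x
  Pstar : ∀ f : M → ℝ, BddMeas f → ∫ x, PR φ κ f x ∂μ = lam * ∫ x, f x ∂μ

/-- Membership in the point peripheral spectrum `σ_per(P)`: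
`|α| = lam` and `P f = α f` for some nonzero `f ∈ L^∞(M,μ;ℂ)`. -/
def PerSpec (μ : Measure M) (κ : Kernel M M) (φ : M → ℝ) (lam : ℝ) (α : ℂ) : Prop :=
  ‖α‖ = lam ∧ ∃ f : M → ℂ, BddMeasC f ∧ ¬ (f =ᵐ[μ] 0) ∧ PC φ κ f =ᵐ[μ] fun x => α * f x

/-- `σ_per(P) = {lam·e^{2πi j/k} : j = 0, …, k-1}`. -/
def PerSpecEq (μ : Measure M) (κ : Kernel M M) (φ : M → ℝ) (lam : ℝ) (k : ℕ) : Prop :=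
  ∀ α : ℂ, PerSpec μ κ φ lam α ↔ ∃ j : ℕ, j < k ∧ α = (lam : ℂ) * rootU k j

/-- A family of `k` linearly independent, nonnegative, continuous functions with pairwise
disjoint supports, spanning `ker(P^k - lam^k)` in `L^∞(M,μ;ℂ)`, each of integral `μ {g>0}`. -/
structure PreFamily (μ : Measure M) (κ : Kernel M M) (φ : M → ℝ) (lam : ℝ) (g : M → ℝ)
    (k : ℕ) (gi : Fin k → M → ℝ) : Prop where
  cont : ∀ i, Continuous (gi i)
  nonneg : ∀ i x, 0 ≤ gi i x
  indep : LinearIndependent ℝ gi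
  span_ker : ∀ f : M → ℂ, BddMeasC f →
      (((PC φ κ)^[k] f) =ᵐ[μ] fun x => (lam : ℂ) ^ k * f x) ↔
        ∃ c : Fin k → ℂ, f =ᵐ[μ] fun x => ∑ i, c i * (gi i x : ℂ)
  integral : ∀ i, ∫ x, gi i x ∂μ = (μ {x | 0 < g x}).toReal
  disj : ∀ i j, i ≠ j → ∀ x, ¬ (0 < gi i x ∧ 0 < gi j x)

/-- The cyclic family hypothesis: nonnegative continuous `g_0, …, g_{k-1}` supported in `{g>0}`
with pairwise disjoint supports, spanning `ker(P^k - lam^k)` in `L^∞(M,μ;ℂ)`, with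
`∫ g_i dμ = μ {g>0}`, `P g_i = lam·g_{i-1 (mod k)}` and `g = (1/k) ∑ g_i`. -/
structure CyclicFamily (μ : Measure M) (κ : Kernel M M) (φ : M → ℝ) (lam : ℝ) (g : M → ℝ)
    (k : ℕ) [NeZero k] (gi : Fin k → M → ℝ) : Prop where
  cont : ∀ i, Continuous (gi i)
  nonneg : ∀ i x, 0 ≤ gi i x
  supported : ∀ i x, 0 < gi i x → 0 < g x
  disj : ∀ i j, i ≠ j → ∀ x, ¬ (0 < gi i x ∧ 0 < gi j x)
  span_ker : ∀ f : M → ℂ, BddMeasC f →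
      (((PC φ κ)^[k] f) =ᵐ[μ] fun x => (lam : ℂ) ^ k * f x) ↔
        ∃ c : Fin k → ℂ, f =ᵐ[μ] fun x => ∑ i, c i * (gi i x : ℂ)
  integral : ∀ i, ∫ x, gi i x ∂μ = (μ {x | 0 < g x}).toReal
  cycle : ∀ i : Fin k, PR φ κ (gi i) = fun x => lam * gi (i - 1) x
  avg : g = fun x => (1 / (k : ℝ)) * ∑ i, gi i x

/-- The spectral decomposition hypothesis: a closed `P_g`-invariant subspace `V` of
`L^∞({g>0},μ;ℂ)` with `L^∞({g>0},μ;ℂ) = span{g_0,…,g_{k-1}} ⊕ V` and such that the spectral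
radius of `P_g` restricted to `V` is `< lam` (expressed through a geometric bound on the
iterates, via Gelfand's formula). -/
structure SpecDecomp (μ : Measure M) (κ : Kernel M M) (φ : M → ℝ) (lam : ℝ) (g : M → ℝ)
    (k : ℕ) (gi : Fin k → M → ℝ) (V : Submodule ℂ (M → ℂ)) : Prop where
  meas : ∀ v ∈ V, Measurable v
  bdd : ∀ v ∈ V, ∃ C : ℝ, ∀ x, ‖v x‖ ≤ C
  supp : ∀ v ∈ V, ∀ x, ¬ 0 < g x → v x = 0
  invariant : ∀ v ∈ V, PgC φ κ g v ∈ V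
  closed : ∀ (u : ℕ → M → ℂ) (f : M → ℂ), (∀ n, u n ∈ V) → Measurable f →
      (∃ C : ℝ, ∀ x, ‖f x‖ ≤ C) → (∀ x, ¬ 0 < g x → f x = 0) →
      Tendsto (fun n => eLpNorm (u n - f) ⊤ μ) atTop (nhds 0) → f ∈ V
  decomp : ∀ f : M → ℂ, BddMeasC f → (∀ x, ¬ 0 < g x → f x = 0) →
      ∃ c : Fin k → ℂ, ∃ v ∈ V, f = fun x => (∑ i, c i * (gi i x : ℂ)) + v x
  unique : ∀ c : Fin k → ℂ, (fun x => ∑ i, c i * (gi i x : ℂ)) ∈ V → c = 0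
  gap : ∃ r : ℝ, 0 ≤ r ∧ r < lam ∧ ∃ C : ℝ, ∀ n : ℕ, ∀ v ∈ V,
      eLpNorm ((PgC φ κ g)^[n] v) ⊤ μ ≤ ENNReal.ofReal (C * r ^ n) * eLpNorm v ⊤ μ

/-- The operator `P^{k+1} - lam^{k+1}` on complex-valued functions. -/
def Qop (φ : M → ℝ) (κ : Kernel M M) (lam : ℝ) (k : ℕ) : (M → ℂ) → (M → ℂ) :=
  fun h x => (PC φ κ)^[k + 1] h x - (lam : ℂ) ^ (k + 1) * h x


section AuxLemmas

set_option linter.unusedSectionVars false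

variable {μ : Measure M} {κ : Kernel M M} {φ : M → ℝ}

lemma integrable_of_bddMeasC (hsub : ∀ x, κ x Set.univ ≤ 1) {f : M → ℂ} (hf : BddMeasC f)
    (x : M) : Integrable f (κ x) := by
  haveI : IsFiniteMeasure (κ x) := ⟨lt_of_le_of_lt (hsub x) ENNReal.one_lt_top⟩
  obtain ⟨C, hC⟩ := hf.2
  exact Integrable.mono' (integrable_const C) hf.1.aestronglyMeasurable
    (Filter.Eventually.of_forall hC)

lemma bddMeasC_PC (hsub : ∀ x, κ x Set.univ ≤ 1) (hφ : Continuous φ) {f : M → ℂ}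
    (hf : BddMeasC f) : BddMeasC (PC φ κ f) := by
  haveI : IsFiniteKernel κ := ⟨⟨1, ENNReal.one_lt_top, hsub⟩⟩
  obtain ⟨C, hC⟩ := hf.2
  constructor
  · apply Measurable.mul
    · exact Complex.measurable_ofReal.comp (Real.measurable_exp.comp hφ.measurable)
    · exact (MeasureTheory.StronglyMeasurable.integral_kernel_prod_right'
        (κ := κ) (f := fun p => f p.2) (hf.1.comp measurable_snd).stronglyMeasurable).measurable
  · obtain ⟨B, hB⟩ := (isCompact_range hφ).bddAbove
    simp only [upperBounds, Set.mem_range, Set.mem_setOf_eq] at hB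
    have hBx : ∀ x, φ x ≤ B := fun x => hB ⟨x, rfl⟩
    refine ⟨Real.exp B * (max C 0), fun x => ?_⟩
    haveI : IsFiniteMeasure (κ x) := ⟨lt_of_le_of_lt (hsub x) ENNReal.one_lt_top⟩
    have h1 : ‖∫ y, f y ∂(κ x)‖ ≤ max C 0 * (κ x Set.univ).toReal :=
      norm_integral_le_of_norm_le_const (Filter.Eventually.of_forall fun y =>
        (hC y).trans (le_max_left _ _))
    have h2 : (κ x Set.univ).toReal ≤ 1 := by
      rw [show (1:ℝ) = (1:ENNReal).toReal by simp]
      exact ENNReal.toReal_mono ENNReal.one_ne_top (hsub x)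
    calc ‖PC φ κ f x‖ = Real.exp (φ x) * ‖∫ y, f y ∂(κ x)‖ := by
          simp [PC, norm_mul, Complex.norm_real, Real.norm_eq_abs,
            abs_of_pos (Real.exp_pos _)]
        _ ≤ Real.exp B * (max C 0) := by
          apply mul_le_mul (Real.exp_le_exp.2 (hBx x)) _ (norm_nonneg _) (Real.exp_pos _).le
          calc ‖∫ y, f y ∂(κ x)‖ ≤ max C 0 * (κ x Set.univ).toReal := h1
            _ ≤ max C 0 * 1 := mul_le_mul_of_nonneg_left h2 (le_max_right _ _)
            _ = max C 0 := mul_one _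

lemma PC_congr_ae (hac : ∀ x, κ x ≪ μ) {f₁ f₂ : M → ℂ} (h : f₁ =ᵐ[μ] f₂) :
    PC φ κ f₁ = PC φ κ f₂ := by
  funext x
  exact congrArg _ (integral_congr_ae ((hac x).ae_le h))

lemma PC_const_mul (c : ℂ) (f : M → ℂ) :
    PC φ κ (fun x => c * f x) = fun x => c * PC φ κ f x := by
  funext x
  simp only [PC, integral_const_mul]
  ring

lemma PC_sum (hsub : ∀ x, κ x Set.univ ≤ 1) {ι : Type*} (s : Finset ι) (F : ι → M → ℂ)
    (hF : ∀ i ∈ s, BddMeasC (F i)) :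
    PC φ κ (fun x => ∑ i ∈ s, F i x) = fun x => ∑ i ∈ s, PC φ κ (F i) x := by
  funext x
  simp only [PC]
  rw [integral_finset_sum s (fun i hi => integrable_of_bddMeasC hsub (hF i hi) x),
    Finset.mul_sum]

lemma bddMeasC_const_mul (c : ℂ) {f : M → ℂ} (hf : BddMeasC f) :
    BddMeasC (fun x => c * f x) := by
  obtain ⟨C, hC⟩ := hf.2
  exact ⟨measurable_const.mul hf.1, ‖c‖ * C, fun x => by
    rw [norm_mul]; exact mul_le_mul_of_nonneg_left (hC x) (norm_nonneg c)⟩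

lemma bddMeasC_sum {ι : Type*} (s : Finset ι) (F : ι → M → ℂ) :
    (∀ i ∈ s, BddMeasC (F i)) → BddMeasC (fun x => ∑ i ∈ s, F i x) := by
  classical
  induction s using Finset.induction_on with
  | empty => exact fun _ => ⟨measurable_const, 0, by simp⟩
  | @insert a s ha ih =>
    intro h
    have h1 := h a (Finset.mem_insert_self a s)
    have h2 := ih fun i hi => h i (Finset.mem_insert_of_mem hi)
    obtain ⟨C1, hC1⟩ := h1.2
    obtain ⟨C2, hC2⟩ := h2.2
    refine ⟨?_, C1 + C2, fun x => ?_⟩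
    · have := h1.1.add h2.1
      simp only [Finset.sum_insert ha]; exact this
    · simp only [Finset.sum_insert ha]
      exact (norm_add_le _ _).trans (add_le_add (hC1 x) (hC2 x))

lemma norm_rootU (n j : ℕ) (hn : n ≠ 0) : ‖rootU n j‖ = 1 := by
  have h : 2 * (Real.pi : ℂ) * Complex.I * (j : ℂ) / (n : ℂ)
      = ((2 * Real.pi * j / n : ℝ) : ℂ) * Complex.I := by
    push_cast
    have : (n:ℂ) ≠ 0 := Nat.cast_ne_zero.2 hn
    field_simp
  rw [rootU, h]
  exact Complex.norm_exp_ofReal_mul_I _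

lemma rootU_pow_self (n j : ℕ) (hn : n ≠ 0) : rootU n j ^ n = 1 := by
  rw [rootU, ← Complex.exp_nat_mul]
  have h : (n:ℂ) * (2 * (Real.pi : ℂ) * Complex.I * (j : ℂ) / (n : ℂ))
      = ((j:ℤ) : ℂ) * (2 * (Real.pi : ℂ) * Complex.I) := by
    have : (n:ℂ) ≠ 0 := Nat.cast_ne_zero.2 hn
    push_cast
    field_simp
  rw [h, Complex.exp_int_mul_two_pi_mul_I]

lemma rootU_one_pow (n m : ℕ) : rootU n 1 ^ m = rootU n m := by
  rw [rootU, ← Complex.exp_nat_mul, rootU]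
  congr 1
  push_cast
  ring

lemma rootU_ne_one (k i : ℕ) (hi0 : 0 < i) (hik : i ≤ k) : rootU (k+1) i ≠ 1 := by
  intro h
  rw [rootU, Complex.exp_eq_one_iff] at h
  obtain ⟨n, hn⟩ := h
  have h2πI : (2*(Real.pi:ℂ)*Complex.I) ≠ 0 := by
    simp [Real.pi_ne_zero, Complex.I_ne_zero, Complex.ext_iff, Real.pi_ne_zero]
  have hk1 : ((k:ℂ)+1) ≠ 0 := by
    have : ((k+1:ℕ):ℂ) ≠ 0 := Nat.cast_ne_zero.2 (Nat.succ_ne_zero k)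
    push_cast at this; exact this
  have hC : (i:ℂ) = (n:ℂ) * ((k:ℂ)+1) := by
    have hk1' : (((k:ℕ)+1 : ℕ):ℂ) ≠ 0 := by push_cast; exact hk1
    rw [div_eq_iff hk1'] at hn
    apply mul_left_cancel₀ h2πI
    push_cast at hn ⊢
    linear_combination hn
  have hZ : (i:ℤ) = n * ((k:ℤ)+1) := by exact_mod_cast hC
  have hn1 : 1 ≤ n := by
    nlinarith [hZ, (show (1:ℤ) ≤ (i:ℤ) by exact_mod_cast hi0),
      (show (i:ℤ) ≤ (k:ℤ) by exact_mod_cast hik)]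
  nlinarith [hZ, (show (i:ℤ) ≤ (k:ℤ) by exact_mod_cast hik)]

lemma sum_rootU_geom (k i : ℕ) (hi0 : 0 < i) (hik : i ≤ k) :
    ∑ m ∈ Finset.range (k+1), ((rootU (k+1) i)⁻¹) ^ m = 0 := by
  have hne : (rootU (k+1) i)⁻¹ ≠ 1 := by
    rw [ne_eq, inv_eq_one]
    exact rootU_ne_one k i hi0 hik
  rw [geom_sum_eq hne]
  have h1 : ((rootU (k+1) i)⁻¹) ^ (k+1) = 1 := by
    rw [inv_pow, rootU_pow_self (k+1) i (Nat.succ_ne_zero k), inv_one]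
  rw [h1]
  simp

lemma aux_sum {lam : ℝ} (hlam : 0 < lam) (k : ℕ) (u : ℕ → ℂ) :
    ∑ m ∈ Finset.range (k+1), ∑ i ∈ Finset.range (k+1),
      (((lam:ℂ) * rootU (k+1) m)⁻¹) ^ i * u i = ((k:ℂ)+1) * u 0 := by
  rw [Finset.sum_comm]
  have key : ∀ i ∈ Finset.range (k+1),
      ∑ m ∈ Finset.range (k+1), (((lam:ℂ) * rootU (k+1) m)⁻¹) ^ i * u i
        = (if i = 0 then ((k:ℂ)+1) else 0) * u i := by
    intro i hi
    rw [← Finset.sum_mul]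
    congr 1
    by_cases h0 : i = 0
    · subst h0
      simp [Finset.sum_const, Finset.card_range]
    · rw [if_neg h0]
      have hik : i ≤ k := by
        have := Finset.mem_range.1 hi; omega
      have hi0 : 0 < i := Nat.pos_of_ne_zero h0
      have hstep : ∀ m, (((lam:ℂ) * rootU (k+1) m)⁻¹) ^ i
          = ((lam:ℂ)⁻¹)^i * ((rootU (k+1) i)⁻¹)^m := by
        intro m
        have hpow : (rootU (k+1) m) ^ i = (rootU (k+1) i) ^ m := by
          rw [← rootU_one_pow (k+1) m, ← rootU_one_pow (k+1) i, ← pow_mul, ← pow_mul,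
            Nat.mul_comm]
        rw [mul_inv, mul_pow]
        congr 1
        rw [inv_pow, inv_pow, hpow]
      rw [Finset.sum_congr rfl fun m _ => hstep m, ← Finset.mul_sum,
        sum_rootU_geom k i hi0 hik, mul_zero]
  rw [Finset.sum_congr rfl key, Finset.sum_eq_single 0]
  · simp
  · intro i _ hne
    rw [if_neg hne, zero_mul]
  · intro h
    exact absurd (Finset.mem_range.2 (Nat.succ_pos k)) h

lemma aux_eigen (hsub : ∀ x, κ x Set.univ ≤ 1) {f : M → ℂ}
    (hPn : ∀ n, BddMeasC ((PC φ κ)^[n] f)) (k : ℕ) {lam : ℝ} {a : ℂ} (ha : a ≠ 0)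
    (hapow : a ^ (k+1) = (lam:ℂ)^(k+1))
    (hQ : (PC φ κ)^[k+1] f =ᵐ[μ] fun x => (lam:ℂ)^(k+1) * f x) :
    PC φ κ (fun x => ∑ i ∈ Finset.range (k+1), (a⁻¹) ^ i * (PC φ κ)^[i] f x)
      =ᵐ[μ] fun x => a * ∑ i ∈ Finset.range (k+1), (a⁻¹) ^ i * (PC φ κ)^[i] f x := by
  have h1 : PC φ κ (fun x => ∑ i ∈ Finset.range (k+1), (a⁻¹) ^ i * (PC φ κ)^[i] f x)
      = fun x => ∑ i ∈ Finset.range (k+1), (a⁻¹) ^ i * (PC φ κ)^[i+1] f x := by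
    have h2 := PC_sum (φ := φ) hsub (Finset.range (k+1))
      (fun i x => (a⁻¹) ^ i * (PC φ κ)^[i] f x)
      (fun i _ => bddMeasC_const_mul _ (hPn i))
    calc PC φ κ (fun x => ∑ i ∈ Finset.range (k+1), (a⁻¹) ^ i * (PC φ κ)^[i] f x)
        = fun x => ∑ i ∈ Finset.range (k+1),
            PC φ κ (fun y => (a⁻¹) ^ i * (PC φ κ)^[i] f y) x := h2
      _ = fun x => ∑ i ∈ Finset.range (k+1), (a⁻¹) ^ i * (PC φ κ)^[i+1] f x := by
          funext x
          refine Finset.sum_congr rfl fun i _ => ?_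
          rw [Function.iterate_succ_apply']
          exact congrFun (PC_const_mul ((a⁻¹) ^ i) ((PC φ κ)^[i] f)) x
  rw [h1]
  filter_upwards [hQ] with x hx
  show ∑ i ∈ Finset.range (k+1), (a⁻¹) ^ i * (PC φ κ)^[i+1] f x
      = a * ∑ i ∈ Finset.range (k+1), (a⁻¹) ^ i * (PC φ κ)^[i] f x
  rw [Finset.sum_range_succ, hx, Finset.mul_sum, Finset.sum_range_succ']
  have hterm : ∀ i, a * ((a⁻¹) ^ (i+1) * (PC φ κ)^[i+1] f x)
      = (a⁻¹) ^ i * (PC φ κ)^[i+1] f x := by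
    intro i
    rw [pow_succ]
    field_simp
  rw [Finset.sum_congr rfl fun i _ => hterm i]
  congr 1
  simp only [pow_zero, one_mul, Function.iterate_zero_apply]
  rw [← hapow]
  rw [inv_pow, pow_succ]
  field_simp

end AuxLemmas

/-- **Step 2 of Lemma A.3.** Under Hypothesis (HA) with
`σ_per(P) = {lam e^{2πi j/k}}_{j<k}`:
`ker(P^{k+1} - lam^{k+1}) = ker(P - lam) = span_ℂ{g}` in `L^∞(M,μ;ℂ)`. -/
theorem statement15 (μ : Measure M) (κ : Kernel M M) (φ : M → ℝ)
    (T : Lp ℂ ⊤ μ →L[ℂ] Lp ℂ ⊤ μ) (lam : ℝ) (g : M → ℝ)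
    (hHA : HypHA μ κ φ T lam g)
    (k : ℕ) (hk1 : 1 ≤ k) (hk : PerSpecEq μ κ φ lam k) :
    ∀ f : M → ℂ, BddMeasC f →
      (((PC φ κ)^[k + 1] f =ᵐ[μ] fun x => (lam : ℂ) ^ (k + 1) * f x) ↔
        (PC φ κ f =ᵐ[μ] fun x => (lam : ℂ) * f x)) ∧
      ((PC φ κ f =ᵐ[μ] fun x => (lam : ℂ) * f x) ↔
        ∃ c : ℂ, f =ᵐ[μ] fun x => c * (g x : ℂ)) := by
  classical
  have hsub := hHA.setup.subMarkov
  have hac := hHA.setup.ac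
  have hφc := hHA.setup.contφ
  have hlam := hHA.lam_pos
  have hk0 : k ≠ 0 := Nat.one_le_iff_ne_zero.mp hk1
  have hk1c : ((k:ℂ)+1) ≠ 0 := by
    have : ((k+1:ℕ):ℂ) ≠ 0 := Nat.cast_ne_zero.2 (Nat.succ_ne_zero k)
    push_cast at this; exact this
  -- easy direction of the first iff
  have easy : ∀ (f : M → ℂ), (PC φ κ f =ᵐ[μ] fun x => (lam : ℂ) * f x) →
      ∀ n : ℕ, (PC φ κ)^[n] f =ᵐ[μ] fun x => (lam : ℂ) ^ n * f x := by
    intro f hP n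
    induction n with
    | zero => simp
    | succ n ih =>
      rw [Function.iterate_succ_apply']
      have h1 : PC φ κ ((PC φ κ)^[n] f) = PC φ κ (fun x => (lam:ℂ)^n * f x) :=
        PC_congr_ae hac ih
      rw [h1, PC_const_mul]
      filter_upwards [hP] with x hx
      show (lam:ℂ)^n * PC φ κ f x = (lam:ℂ)^(n+1) * f x
      rw [hx]
      ring
  intro f hf
  have hPn : ∀ n, BddMeasC ((PC φ κ)^[n] f) := by
    intro n
    induction n with
    | zero => simpa using hf
    | succ n ih =>
      rw [Function.iterate_succ_apply']
      exact bddMeasC_PC hsub hφc ih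
  constructor
  · -- first iff
    constructor
    · intro hQ
      set H : ℕ → M → ℂ := fun m x => ∑ i ∈ Finset.range (k+1),
        ((((lam:ℂ) * rootU (k+1) m))⁻¹) ^ i * (PC φ κ)^[i] f x with hH
      have hαnz : ∀ m : ℕ, (lam:ℂ) * rootU (k+1) m ≠ 0 := fun m =>
        mul_ne_zero (Complex.ofReal_ne_zero.2 hlam.ne') (Complex.exp_ne_zero _)
      have hαpow : ∀ m : ℕ, ((lam:ℂ) * rootU (k+1) m) ^ (k+1) = (lam:ℂ)^(k+1) := by
        intro m
        rw [mul_pow, rootU_pow_self (k+1) m (Nat.succ_ne_zero k), mul_one]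
      have hHbm : ∀ m, BddMeasC (H m) := fun m =>
        bddMeasC_sum _ _ (fun i _ => bddMeasC_const_mul _ (hPn i))
      have hB : ∀ m : ℕ, PC φ κ (H m) =ᵐ[μ] fun x => ((lam:ℂ) * rootU (k+1) m) * H m x :=
        fun m => aux_eigen hsub hPn k (hαnz m) (hαpow m) hQ
      have hnormα : ∀ m : ℕ, ‖(lam:ℂ) * rootU (k+1) m‖ = lam := by
        intro m
        rw [norm_mul, Complex.norm_real, Real.norm_eq_abs, abs_of_pos hlam,
          norm_rootU (k+1) m (Nat.succ_ne_zero k), mul_one]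
      have hαlam : ∀ m : ℕ, ¬ (H m =ᵐ[μ] 0) → (lam:ℂ) * rootU (k+1) m = (lam:ℂ) := by
        intro m hm
        have hper : PerSpec μ κ φ lam ((lam:ℂ) * rootU (k+1) m) :=
          ⟨hnormα m, H m, hHbm m, hm, hB m⟩
        obtain ⟨j, hj, hje⟩ := (hk _).1 hper
        have h1 : ((lam:ℂ) * rootU (k+1) m) ^ k = (lam:ℂ)^k := by
          rw [hje, mul_pow, rootU_pow_self k j hk0, mul_one]
        have h2 : ((lam:ℂ) * rootU (k+1) m) ^ (k+1) = (lam:ℂ)^(k+1) := hαpow m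
        have hlk : (lam:ℂ)^k ≠ 0 := pow_ne_zero _ (Complex.ofReal_ne_zero.2 hlam.ne')
        rw [pow_succ, pow_succ, h1] at h2
        exact mul_left_cancel₀ hlk h2
      have hD : ∀ m ∈ Finset.range (k+1),
          ∀ᵐ x ∂μ, ((lam:ℂ) * rootU (k+1) m - lam) * H m x = 0 := by
        intro m _
        by_cases hm : H m =ᵐ[μ] 0
        · filter_upwards [hm] with x hx
          rw [show H m x = 0 from hx, mul_zero]
        · filter_upwards [] with x
          rw [hαlam m hm]
          simp
      have hfeq : f = fun x => ((k:ℂ)+1)⁻¹ * ∑ m ∈ Finset.range (k+1), H m x := by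
        funext x
        have hS : ∑ m ∈ Finset.range (k+1), H m x = ((k:ℂ)+1) * f x :=
          aux_sum hlam k (fun i => (PC φ κ)^[i] f x)
        rw [hS, ← mul_assoc, inv_mul_cancel₀ hk1c, one_mul]
      have hPCf : PC φ κ f = fun x => ((k:ℂ)+1)⁻¹ *
          ∑ m ∈ Finset.range (k+1), PC φ κ (H m) x := by
        calc PC φ κ f
            = PC φ κ (fun x => ((k:ℂ)+1)⁻¹ * ∑ m ∈ Finset.range (k+1), H m x) :=
              congrArg _ hfeq
          _ = fun x => ((k:ℂ)+1)⁻¹ *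
                PC φ κ (fun y => ∑ m ∈ Finset.range (k+1), H m y) x :=
              PC_const_mul _ _
          _ = fun x => ((k:ℂ)+1)⁻¹ * ∑ m ∈ Finset.range (k+1), PC φ κ (H m) x := by
              rw [PC_sum hsub _ _ (fun m _ => hHbm m)]
      have hAll : ∀ᵐ x ∂μ, ∀ m ∈ Finset.range (k+1),
          PC φ κ (H m) x = ((lam:ℂ) * rootU (k+1) m) * H m x ∧
          ((lam:ℂ) * rootU (k+1) m - lam) * H m x = 0 := by
        refine (Filter.eventually_all_finset _).2 fun m hm => ?_
        filter_upwards [hB m, hD m hm] with x h1 h2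
        exact ⟨h1, h2⟩
      filter_upwards [hAll] with x hx
      show PC φ κ f x = (lam:ℂ) * f x
      have e1 : PC φ κ f x = ((k:ℂ)+1)⁻¹ *
          ∑ m ∈ Finset.range (k+1), PC φ κ (H m) x := congrFun hPCf x
      have e2 : ∑ m ∈ Finset.range (k+1), PC φ κ (H m) x
          = ∑ m ∈ Finset.range (k+1), (lam:ℂ) * H m x := by
        refine Finset.sum_congr rfl fun m hm => ?_
        have h1 := (hx m hm).1
        have h2 := (hx m hm).2
        rw [h1]
        linear_combination h2
      have e3 : ∑ m ∈ Finset.range (k+1), H m x = ((k:ℂ)+1) * f x :=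
        aux_sum hlam k (fun i => (PC φ κ)^[i] f x)
      rw [e1, e2, ← Finset.mul_sum, e3]
      field_simp
    · intro hP
      exact easy f hP (k+1)
  · -- second iff
    constructor
    · intro hP
      obtain ⟨C, hC⟩ := hf.2
      have hu : BddMeas (fun x => (f x).re) :=
        ⟨Complex.measurable_re.comp hf.1, C, fun x =>
          (Complex.abs_re_le_norm (f x)).trans (by simpa using hC x)⟩
      have hv : BddMeas (fun x => (f x).im) :=
        ⟨Complex.measurable_im.comp hf.1, C, fun x =>
          (Complex.abs_im_le_norm (f x)).trans (by simpa using hC x)⟩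
      have hre : ∀ x, (PC φ κ f x).re = PR φ κ (fun x => (f x).re) x := by
        intro x
        have hint : Integrable f (κ x) := integrable_of_bddMeasC hsub hf x
        simp only [PC, PR, Complex.re_ofReal_mul]
        congr 1
        simpa using (integral_re hint).symm
      have him : ∀ x, (PC φ κ f x).im = PR φ κ (fun x => (f x).im) x := by
        intro x
        have hint : Integrable f (κ x) := integrable_of_bddMeasC hsub hf x
        simp only [PC, PR, Complex.im_ofReal_mul]
        congr 1
        simpa using (integral_im hint).symm
      have hue : PR φ κ (fun x => (f x).re) =ᵐ[μ] fun x => lam * (f x).re := by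
        filter_upwards [hP] with x hx
        have h1 := congrArg Complex.re hx
        rw [hre x, Complex.re_ofReal_mul] at h1
        exact h1
      have hve : PR φ κ (fun x => (f x).im) =ᵐ[μ] fun x => lam * (f x).im := by
        filter_upwards [hP] with x hx
        have h1 := congrArg Complex.im hx
        rw [him x, Complex.im_ofReal_mul] at h1
        exact h1
      obtain ⟨a, ha⟩ := hHA.eigen_dim _ hu hue
      obtain ⟨b, hb⟩ := hHA.eigen_dim _ hv hve
      refine ⟨a + b * Complex.I, ?_⟩
      filter_upwards [ha, hb] with x hxa hxb
      have h1 : f x = ((f x).re : ℂ) + ((f x).im : ℂ) * Complex.I :=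
        (Complex.re_add_im (f x)).symm
      rw [h1, show (f x).re = a * g x from hxa, show (f x).im = b * g x from hxb]
      push_cast
      ring
    · rintro ⟨c, hc⟩
      obtain ⟨B, hB⟩ := (isCompact_range (hHA.g_cont.abs)).bddAbove
      have hgb : ∀ x, |g x| ≤ B := fun x => hB ⟨x, rfl⟩
      have hgint : ∀ x, Integrable g (κ x) := by
        intro x
        haveI : IsFiniteMeasure (κ x) := ⟨lt_of_le_of_lt (hsub x) ENNReal.one_lt_top⟩
        exact Integrable.mono' (integrable_const B)
          hHA.g_cont.measurable.aestronglyMeasurable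
          (Filter.Eventually.of_forall fun y => by rw [Real.norm_eq_abs]; exact hgb y)
      have hPCg : ∀ x, PC φ κ (fun y => (g y : ℂ)) x = ((PR φ κ g x : ℝ) : ℂ) := by
        intro x
        have hcast : ∫ y, ((g y : ℝ) : ℂ) ∂(κ x) = ((∫ y, g y ∂(κ x) : ℝ) : ℂ) := by
          simpa using ContinuousLinearMap.integral_comp_comm Complex.ofRealCLM (hgint x)
        simp only [PC, PR]
        rw [hcast, ← Complex.ofReal_mul]
      have h1 : PC φ κ f = fun x => c * PC φ κ (fun y => (g y : ℂ)) x := by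
        calc PC φ κ f = PC φ κ (fun x => c * (g x : ℂ)) := PC_congr_ae hac hc
          _ = fun x => c * PC φ κ (fun y => (g y : ℂ)) x := PC_const_mul _ _
      filter_upwards [hc] with x hx
      calc PC φ κ f x = c * PC φ κ (fun y => (g y : ℂ)) x := congrFun h1 x
        _ = c * ((PR φ κ g x : ℝ) : ℂ) := by rw [hPCg x]
        _ = c * (((lam * g x : ℝ) : ℝ) : ℂ) := by rw [congrFun hHA.g_eigen x]
        _ = (lam : ℂ) * (c * (g x : ℂ)) := by push_cast; ring
        _ = (lam : ℂ) * f x := by rw [hx]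


end

end QEM
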